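/- Let z = (−1 + i√(d²−1))/d and Q⁺ = (𝟙 + zS)/2, Q⁻ = (Q⁺)† = (𝟙 + z̄S)/2, where S is the swap on ℂ^d ⊗ ℂ^d. Then |z| = 1, and defining I±(ρ) := (2d/(d²−1)) Q±(𝟙⊗ρ)Q∓, the identity ((𝟙⊗ρ)S − S(𝟙⊗ρ))/(2i) = (√(d²−1)/2)·(I₊(ρ) − I₋(ρ)) holds for every matrix ρ on ℂ^d. -/

import Mathlib

open Matrix Kronecker Complex
open scoped ComplexOrder

noncomputable section

def swap (d : ℕ) : Matrix (Fin d × Fin d) (Fin d × Fin d) ℂ :=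
  Matrix.of fun p q => if p.1 = q.2 ∧ p.2 = q.1 then 1 else 0

def zPhase (d : ℕ) : ℂ := (-1 + Complex.I * (Real.sqrt ((d:ℝ)^2 - 1) : ℂ)) / (d : ℂ)

def Qp (d : ℕ) : Matrix (Fin d × Fin d) (Fin d × Fin d) ℂ :=
  (2:ℂ)⁻¹ • (1 + zPhase d • swap d)

def Qm (d : ℕ) : Matrix (Fin d × Fin d) (Fin d × Fin d) ℂ :=
  (2:ℂ)⁻¹ • (1 + (starRingEnd ℂ) (zPhase d) • swap d)

def Ip (d : ℕ) (ρ : Matrix (Fin d) (Fin d) ℂ) : Matrix (Fin d × Fin d) (Fin d × Fin d) ℂ :=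
  (2 * (d : ℂ) / ((d:ℂ)^2 - 1)) • (Qp d * ((1 : Matrix (Fin d) (Fin d) ℂ) ⊗ₖ ρ) * Qm d)

def Im (d : ℕ) (ρ : Matrix (Fin d) (Fin d) ℂ) : Matrix (Fin d × Fin d) (Fin d × Fin d) ℂ :=
  (2 * (d : ℂ) / ((d:ℂ)^2 - 1)) • (Qm d * ((1 : Matrix (Fin d) (Fin d) ℂ) ⊗ₖ ρ) * Qp d)

lemma swap_conjTranspose (d : ℕ) : (swap d)ᴴ = swap d := by
  ext p q
  simp only [conjTranspose_apply, _root_.swap, Matrix.of_apply, apply_ite (star : ℂ → ℂ),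
    star_one, star_zero]
  congr 1
  simp only [eq_iff_iff]
  constructor <;> rintro ⟨h1, h2⟩ <;> exact ⟨h2.symm, h1.symm⟩

lemma conj_zPhase (d : ℕ) :
    (starRingEnd ℂ) (zPhase d) =
      (-1 - Complex.I * (Real.sqrt ((d:ℝ)^2 - 1) : ℂ)) / (d : ℂ) := by
  simp [zPhase, map_div₀, map_add, _root_.map_mul, Complex.conj_I, Complex.conj_ofReal]
  ring

theorem imaginary_part_statistical_decomposition {d : ℕ} (hd : 2 ≤ d) :
    Qm d = (Qp d)ᴴ ∧
    ‖zPhase d‖ = 1 ∧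
    ∀ ρ : Matrix (Fin d) (Fin d) ℂ,
      ((2 * Complex.I)⁻¹ : ℂ) • (((1 : Matrix (Fin d) (Fin d) ℂ) ⊗ₖ ρ) * swap d
          - swap d * ((1 : Matrix (Fin d) (Fin d) ℂ) ⊗ₖ ρ))
        = ((Real.sqrt ((d:ℝ)^2 - 1) : ℂ) / 2) • (Ip d ρ - Im d ρ) := by
  have hd0 : (d : ℝ) ≠ 0 := by positivity
  have hdC : (d : ℂ) ≠ 0 := by exact_mod_cast Nat.cast_ne_zero.mpr (by omega)
  have hdr : (2:ℝ) ≤ (d:ℝ) := by exact_mod_cast hd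
  have hpos : (0:ℝ) < (d:ℝ)^2 - 1 := by nlinarith
  set s : ℝ := Real.sqrt ((d:ℝ)^2 - 1) with hs
  have hs2 : s^2 = (d:ℝ)^2 - 1 := Real.sq_sqrt hpos.le
  have hs2C : (s:ℂ)^2 = (d:ℂ)^2 - 1 := by
    have h := congrArg (fun x : ℝ => (x:ℂ)) hs2
    push_cast at h
    linear_combination h
  have hspos : 0 < s := Real.sqrt_pos.mpr hpos
  have hsC : (s:ℂ) ≠ 0 := by exact_mod_cast hspos.ne'
  have hne : ((d:ℂ)^2 - 1) ≠ 0 := by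
    rw [← hs2C]; exact pow_ne_zero 2 hsC
  refine ⟨?_, ?_, ?_⟩
  · unfold Qm Qp
    rw [conjTranspose_smul, conjTranspose_add, conjTranspose_one, conjTranspose_smul,
      swap_conjTranspose]
    norm_num
  · have h1 : ‖zPhase d‖ ^ 2 = 1 := by
      rw [Complex.sq_norm, zPhase]
      rw [Complex.normSq_div]
      have : Complex.normSq (-1 + Complex.I * (s:ℂ)) = 1 + s^2 := by
        simp [Complex.normSq_apply]; ring
      rw [this, hs2]
      have : Complex.normSq (d:ℂ) = (d:ℝ)^2 := by
        simp [Complex.normSq_apply]; ring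
      rw [this]
      field_simp
      ring
    have h0 : 0 ≤ ‖zPhase d‖ := norm_nonneg _
    nlinarith [h1]
  · intro ρ
    set A := ((1 : Matrix (Fin d) (Fin d) ℂ) ⊗ₖ ρ)
    set S := swap d
    unfold Ip Im Qp Qm
    rw [conj_zPhase, ← hs]
    simp only [zPhase, ← hs]
    simp only [Matrix.smul_mul, Matrix.mul_smul, Matrix.add_mul, Matrix.mul_add,
      Matrix.one_mul, Matrix.mul_one, smul_smul, smul_add, smul_sub, mul_assoc]
    have hX : (-((d:ℂ)*2)+(d:ℂ)^3*2) ≠ 0 := by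
      have h : (-((d:ℂ)*2)+(d:ℂ)^3*2) = 2*(d:ℂ)*((d:ℂ)^2-1) := by ring
      rw [h]; exact mul_ne_zero (mul_ne_zero two_ne_zero hdC) hne
    match_scalars
    all_goals try ring
    all_goals (field_simp; ring_nf; rw [hs2C]; field_simp [hX]; ring)
    all_goals (rw [Complex.I_sq]; field_simp [show (-1 + (d:ℂ)^2) ≠ 0 by rw [add_comm, ← sub_eq_add_neg]; exact hne]; ring)
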